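/- Let ν ∼ N(0, a⁻²) be a one-dimensional Gaussian with a > 0. For any real x, E[max(x + ν, 0)] − x = ∫_{−∞}^{−x} Φ(at) dt, where Φ is the standard normal CDF. Consequently, for x₁ ≤ xₙ, (E[max(x₁+ν,0)] − x₁) − (E[max(xₙ+ν,0)] − xₙ) = ∫_{−xₙ}^{−x₁} Φ(at) dt, and this quantity lies in [Φ(−a xₙ)(xₙ − x₁), Φ(−a x₁)(xₙ − x₁)]. -/

import Mathlib

open MeasureTheory

/-- The standard normal cumulative distribution function. -/
noncomputable def stdNormalCDF (t : ℝ) : ℝ :=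
  ∫ s in Set.Iic t, Real.exp (-(s ^ 2) / 2) / Real.sqrt (2 * Real.pi)

/-- `E[max (x + ν) 0]` for `ν ~ N(0, a⁻²)`, written against the Gaussian density. -/
noncomputable def gaussPlusExp (a x : ℝ) : ℝ :=
  ∫ ν : ℝ, max (x + ν) 0 * (a / Real.sqrt (2 * Real.pi) * Real.exp (-(a ^ 2 * ν ^ 2) / 2))

open MeasureTheory Set Filter Real

noncomputable def npdf (s : ℝ) : ℝ := Real.exp (-(s ^ 2) / 2) / Real.sqrt (2 * Real.pi)

lemma npdf_nonneg (s : ℝ) : 0 ≤ npdf s :=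
  div_nonneg (Real.exp_pos _).le (Real.sqrt_nonneg _)

lemma npdf_cont : Continuous npdf := by
  unfold npdf; fun_prop

lemma npdf_eq (s : ℝ) : npdf s = Real.exp (-(1/2 : ℝ) * s ^ 2) / Real.sqrt (2 * Real.pi) := by
  unfold npdf; ring_nf

lemma integrable_npdf : Integrable npdf := by
  have h := (integrable_exp_neg_mul_sq (by norm_num : (0:ℝ) < 1/2)).div_const (Real.sqrt (2 * Real.pi))
  have e : npdf = fun s => Real.exp (-(1/2 : ℝ) * s ^ 2) / Real.sqrt (2 * Real.pi) := funext npdf_eq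
  rw [e]; exact h

lemma sqrt_two_pi_pos : 0 < Real.sqrt (2 * Real.pi) :=
  Real.sqrt_pos.2 (by positivity)

lemma integral_npdf : ∫ s, npdf s = 1 := by
  have h := integral_gaussian (1/2 : ℝ)
  have h2 : Real.sqrt (Real.pi / (1/2)) = Real.sqrt (2 * Real.pi) := by
    norm_num [mul_comm]
  simp only [npdf_eq]
  rw [integral_div, h, h2, div_self sqrt_two_pi_pos.ne']

lemma npdf_even (s : ℝ) : npdf (-s) = npdf s := by simp [npdf]

lemma npdf_le_exp (s : ℝ) : npdf s ≤ Real.exp s := by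
  unfold npdf
  rw [div_le_iff₀ sqrt_two_pi_pos]
  calc Real.exp (-(s ^ 2) / 2) ≤ Real.exp s * Real.exp (1/2 : ℝ) := by
        rw [← Real.exp_add]
        apply Real.exp_le_exp.2
        nlinarith [sq_nonneg (s + 1)]
    _ ≤ Real.exp s * Real.sqrt (2 * Real.pi) := by
        have h1 : Real.exp (1/2 : ℝ) ≤ 2 := by
          have hm : Real.exp (1/2 : ℝ) * Real.exp (1/2 : ℝ) = Real.exp 1 := by
            rw [← Real.exp_add]; norm_num
          nlinarith [Real.exp_one_lt_d9, Real.exp_pos (1/2 : ℝ)]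
        have h2 : (2:ℝ) ≤ Real.sqrt (2 * Real.pi) := by
          apply Real.le_sqrt_of_sq_le
          nlinarith [Real.pi_gt_three]
        nlinarith [Real.exp_pos s]

lemma hasDerivAt_npdf (s : ℝ) : HasDerivAt npdf (-s * npdf s) s := by
  have h1 : HasDerivAt (fun u : ℝ => -(u ^ 2) / 2) (-s) s := by
    have := ((hasDerivAt_pow 2 s).neg).div_const 2
    simpa using this.congr_deriv (by ring)
  have h2 := (h1.exp).div_const (Real.sqrt (2 * Real.pi))
  exact h2.congr_deriv (by unfold npdf; ring)

lemma cdf_eq (t : ℝ) : stdNormalCDF t = ∫ s in Iic t, npdf s := rfl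

lemma cdf_nonneg (t : ℝ) : 0 ≤ stdNormalCDF t := by
  rw [cdf_eq]
  exact setIntegral_nonneg measurableSet_Iic fun s _ => npdf_nonneg s

lemma cdf_le_exp (t : ℝ) : stdNormalCDF t ≤ Real.exp t := by
  rw [cdf_eq, ← integral_exp_Iic t]
  exact setIntegral_mono_on integrable_npdf.integrableOn (integrableOn_exp_Iic t)
    measurableSet_Iic fun s _ => npdf_le_exp s

lemma cdf_mono : Monotone stdNormalCDF := by
  intro s t h
  rw [cdf_eq, cdf_eq]
  exact setIntegral_mono_set integrable_npdf.integrableOn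
    (Eventually.of_forall fun s => npdf_nonneg s)
    (HasSubset.Subset.eventuallyLE (Iic_subset_Iic.2 h))

lemma cdf_hasDerivAt (t : ℝ) : HasDerivAt stdNormalCDF (npdf t) t := by
  have key : ∀ u : ℝ, stdNormalCDF u = stdNormalCDF 0 + ∫ s in (0:ℝ)..u, npdf s := by
    intro u
    rw [cdf_eq, cdf_eq, ← intervalIntegral.integral_Iic_sub_Iic
      integrable_npdf.integrableOn integrable_npdf.integrableOn]
    ring
  have h : HasDerivAt (fun u : ℝ => stdNormalCDF 0 + ∫ s in (0:ℝ)..u, npdf s) (npdf t) t := by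
    have := intervalIntegral.integral_hasDerivAt_right
      (integrable_npdf.intervalIntegrable : IntervalIntegrable npdf volume 0 t)
      (npdf_cont.stronglyMeasurableAtFilter volume (nhds t))
      npdf_cont.continuousAt
    simpa using this.const_add (stdNormalCDF 0)
  exact (funext key : stdNormalCDF = _) ▸ h

lemma cdf_continuous : Continuous stdNormalCDF :=
  continuous_iff_continuousAt.2 fun t => (cdf_hasDerivAt t).continuousAt

lemma cdf_neg_eq (t : ℝ) : stdNormalCDF (-t) = 1 - stdNormalCDF t := by
  have h1 : (∫ x in Ioi t, npdf (-x)) = ∫ x in Iic (-t), npdf x :=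
    integral_comp_neg_Ioi t npdf
  simp_rw [npdf_even] at h1
  have h2 : stdNormalCDF t + ∫ x in Ioi t, npdf x = 1 := by
    rw [cdf_eq, intervalIntegral.integral_Iic_add_Ioi integrable_npdf.integrableOn
      integrable_npdf.integrableOn, integral_npdf]
  rw [cdf_eq, ← h1]
  linarith

lemma cdf_tendsto_atBot : Tendsto stdNormalCDF atBot (nhds 0) := by
  exact tendsto_of_tendsto_of_tendsto_of_le_of_le (g := fun _ => (0:ℝ))
    tendsto_const_nhds Real.tendsto_exp_atBot cdf_nonneg cdf_le_exp

lemma integrableOn_exp_mul_Iic' {a : ℝ} (ha : 0 < a) (b : ℝ) :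
    IntegrableOn (fun t => Real.exp (a * t)) (Iic b) := by
  have h : IntegrableOn (fun x => Real.exp (-a * x)) (Ici (-b)) := by
    rw [integrableOn_Ici_iff_integrableOn_Ioi]
    exact exp_neg_integrableOn_Ioi _ ha
  have h_map : (volume.restrict (Ici (-b))).map Neg.neg = volume.restrict (Iic b) := by
    have e1 : ((volume : Measure ℝ).map Neg.neg).restrict (Iic b)
        = ((volume : Measure ℝ).restrict (Neg.neg ⁻¹' (Iic b))).map Neg.neg :=
      Measure.restrict_map measurable_neg measurableSet_Iic
    rw [Measure.map_neg_eq_self (volume : Measure ℝ)] at e1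
    rw [e1]
    congr 1
    simp
  rw [IntegrableOn, ← h_map, measurableEmbedding_neg.integrable_map_iff]
  simpa [IntegrableOn, Function.comp_def, mul_neg, neg_mul] using h

lemma integrableOn_cdf_mul_Iic {a : ℝ} (ha : 0 < a) (b : ℝ) :
    IntegrableOn (fun t => stdNormalCDF (a * t)) (Iic b) := by
  refine Integrable.mono' (integrableOn_exp_mul_Iic' ha b)
    ((cdf_continuous.comp (continuous_const.mul continuous_id)).aestronglyMeasurable) ?_
  refine Eventually.of_forall fun t => ?_
  rw [Real.norm_of_nonneg (cdf_nonneg _)]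
  exact cdf_le_exp _

lemma hasDerivAt_Fa {a : ℝ} (ha : 0 < a) (t : ℝ) :
    HasDerivAt (fun t => t * stdNormalCDF (a * t) + a⁻¹ * npdf (a * t))
      (stdNormalCDF (a * t)) t := by
  have h1 : HasDerivAt (fun t : ℝ => a * t) a t := by
    simpa using (hasDerivAt_id t).const_mul a
  have h2 : HasDerivAt (fun t => stdNormalCDF (a * t)) (npdf (a * t) * a) t :=
    (cdf_hasDerivAt (a * t)).comp t h1
  have h3 : HasDerivAt (fun t => npdf (a * t)) (-(a * t) * npdf (a * t) * a) t :=
    (hasDerivAt_npdf (a * t)).comp t h1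
  have h4 := ((hasDerivAt_id t).mul h2).add (h3.const_mul a⁻¹)
  refine h4.congr_deriv ?_
  field_simp
  simp only [id_eq]
  ring

lemma Fa_tendsto_atBot {a : ℝ} (ha : 0 < a) :
    Tendsto (fun t => t * stdNormalCDF (a * t) + a⁻¹ * npdf (a * t)) atBot (nhds 0) := by
  have hmul : Tendsto (fun t : ℝ => a * t) atBot atBot := by
    exact Tendsto.const_mul_atBot ha tendsto_id
  have hneg : Tendsto (fun t : ℝ => -(a * t)) atBot atTop := by
    exact tendsto_neg_atBot_atTop.comp hmul
  have hexp : Tendsto (fun t : ℝ => Real.exp (a * t)) atBot (nhds 0) :=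
    Real.tendsto_exp_atBot.comp hmul
  have hA : Tendsto (fun t : ℝ => t * Real.exp (a * t)) atBot (nhds 0) := by
    have h0 := (tendsto_pow_mul_exp_neg_atTop_nhds_zero 1).comp hneg
    have h1 := h0.const_mul (-a⁻¹)
    rw [mul_zero] at h1
    refine h1.congr fun t => ?_
    simp only [Function.comp_apply, pow_one]
    rw [neg_neg]
    field_simp
  have hB : Tendsto (fun t : ℝ => t * stdNormalCDF (a * t)) atBot (nhds 0) := by
    refine tendsto_of_tendsto_of_tendsto_of_le_of_le' hA tendsto_const_nhds ?_ ?_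
    · filter_upwards [eventually_le_atBot (0:ℝ)] with t ht
      exact mul_le_mul_of_nonpos_left (cdf_le_exp _) ht
    · filter_upwards [eventually_le_atBot (0:ℝ)] with t ht
      exact mul_nonpos_of_nonpos_of_nonneg ht (cdf_nonneg _)
  have hC : Tendsto (fun t : ℝ => npdf (a * t)) atBot (nhds 0) := by
    refine tendsto_of_tendsto_of_tendsto_of_le_of_le tendsto_const_nhds hexp
      (fun t => npdf_nonneg _) fun t => npdf_le_exp _
  have := hB.add ((hC.const_mul a⁻¹))
  simpa using this

lemma integral_Iic_cdf {a : ℝ} (ha : 0 < a) (b : ℝ) :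
    ∫ t in Iic b, stdNormalCDF (a * t)
      = b * stdNormalCDF (a * b) + a⁻¹ * npdf (a * b) := by
  have := integral_Iic_of_hasDerivAt_of_tendsto'
    (f := fun t => t * stdNormalCDF (a * t) + a⁻¹ * npdf (a * t))
    (f' := fun t => stdNormalCDF (a * t))
    (fun t _ => hasDerivAt_Fa ha t) (integrableOn_cdf_mul_Iic ha b) (Fa_tendsto_atBot ha)
  simpa using this

lemma integrable_npdf_comp {a : ℝ} (ha : 0 < a) :
    Integrable (fun ν : ℝ => npdf (a * ν)) :=
  integrable_npdf.comp_mul_left' ha.ne'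

lemma npdf_comp_eq {a : ℝ} (ν : ℝ) :
    npdf (a * ν) = Real.exp (-(a ^ 2 / 2) * ν ^ 2) / Real.sqrt (2 * Real.pi) := by
  unfold npdf
  rw [mul_pow, show -((a ^ 2 * ν ^ 2)) / 2 = -(a ^ 2 / 2) * ν ^ 2 by ring]

lemma integrable_mul_npdf_comp {a : ℝ} (ha : 0 < a) :
    Integrable (fun ν : ℝ => ν * npdf (a * ν)) := by
  have hb : (0:ℝ) < a ^ 2 / 2 := by positivity
  have h := (integrable_mul_exp_neg_mul_sq hb).div_const (Real.sqrt (2 * Real.pi))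
  refine h.congr (Eventually.of_forall fun ν => ?_)
  simp only [npdf_comp_eq]
  ring

lemma npdf_tendsto_atTop : Tendsto npdf atTop (nhds 0) := by
  have hle : ∀ s : ℝ, npdf s ≤ Real.exp (-s) := fun s => by
    rw [← npdf_even]; exact npdf_le_exp (-s)
  refine tendsto_of_tendsto_of_tendsto_of_le_of_le tendsto_const_nhds
    (Real.tendsto_exp_atBot.comp tendsto_neg_atTop_atBot) (fun s => npdf_nonneg s) hle

lemma integral_Ioi_npdf (c : ℝ) : ∫ s in Ioi c, npdf s = 1 - stdNormalCDF c := by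
  have h := intervalIntegral.integral_Iic_add_Ioi (b := c) (f := npdf) (μ := volume)
    integrable_npdf.integrableOn integrable_npdf.integrableOn
  rw [integral_npdf] at h
  rw [cdf_eq]
  linarith

lemma integral_Ioi_mul_npdf {a : ℝ} (ha : 0 < a) (c : ℝ) :
    ∫ ν in Ioi c, ν * (a * npdf (a * ν)) = a⁻¹ * npdf (a * c) := by
  have hderiv : ∀ ν ∈ Ici c, HasDerivAt (fun ν => -a⁻¹ * npdf (a * ν))
      (ν * (a * npdf (a * ν))) ν := by
    intro ν _
    have h1 : HasDerivAt (fun ν : ℝ => a * ν) a ν := by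
      simpa using (hasDerivAt_id ν).const_mul a
    have h3 : HasDerivAt (fun ν => npdf (a * ν)) (-(a * ν) * npdf (a * ν) * a) ν :=
      (hasDerivAt_npdf (a * ν)).comp ν h1
    have h4 := h3.const_mul (-a⁻¹)
    refine h4.congr_deriv ?_
    field_simp
  have hint : IntegrableOn (fun ν => ν * (a * npdf (a * ν))) (Ioi c) := by
    have := (integrable_mul_npdf_comp ha).const_mul a
    refine this.integrableOn.congr_fun (fun ν _ => by ring) measurableSet_Ioi
  have htend : Tendsto (fun ν => -a⁻¹ * npdf (a * ν)) atTop (nhds 0) := by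
    have := (npdf_tendsto_atTop.comp (Tendsto.const_mul_atTop ha tendsto_id)).const_mul (-a⁻¹)
    simpa using this
  have := integral_Ioi_of_hasDerivAt_of_tendsto' hderiv hint htend
  rw [this]
  ring

lemma gauss_closed {a : ℝ} (ha : 0 < a) (x : ℝ) :
    gaussPlusExp a x = x * stdNormalCDF (a * x) + a⁻¹ * npdf (a * x) := by
  have hrw : gaussPlusExp a x = ∫ ν : ℝ, max (x + ν) 0 * (a * npdf (a * ν)) := by
    unfold gaussPlusExp npdf
    congr 1
    funext ν
    rw [mul_pow]
    ring
  set f : ℝ → ℝ := fun ν => max (x + ν) 0 * (a * npdf (a * ν)) with hf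
  have heq1 : EqOn (fun _ : ℝ => (0:ℝ)) f (Iic (-x)) := by
    intro ν hν
    have : x + ν ≤ 0 := by have := mem_Iic.1 hν; linarith
    simp [hf, max_eq_right this]
  have heq2 : EqOn (fun ν => (x + ν) * (a * npdf (a * ν))) f (Ioi (-x)) := by
    intro ν hν
    have : 0 ≤ x + ν := by have := mem_Ioi.1 hν; linarith
    simp [hf, max_eq_left this]
  have hg : Integrable (fun ν : ℝ => (x + ν) * (a * npdf (a * ν))) := by
    have i1 := ((integrable_npdf_comp ha).const_mul (x * a)).add
      (((integrable_mul_npdf_comp ha).const_mul a))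
    refine i1.congr (Eventually.of_forall fun ν => ?_)
    simp only [Pi.add_apply]
    ring
  have hint1 : IntegrableOn f (Iic (-x)) :=
    (integrableOn_zero (ε' := ℝ)).congr_fun heq1 measurableSet_Iic
  have hint2 : IntegrableOn f (Ioi (-x)) :=
    hg.integrableOn.congr_fun heq2 measurableSet_Ioi
  have hsplit := intervalIntegral.integral_Iic_add_Ioi (b := -x) (f := f) (μ := volume)
    hint1 hint2
  have hIic : ∫ ν in Iic (-x), f ν = 0 := by
    rw [← setIntegral_congr_fun measurableSet_Iic heq1]
    simp
  have hIoi : ∫ ν in Ioi (-x), f ν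
      = ∫ ν in Ioi (-x), (x + ν) * (a * npdf (a * ν)) :=
    (setIntegral_congr_fun measurableSet_Ioi heq2).symm
  have hA : ∫ ν in Ioi (-x), a * npdf (a * ν) = stdNormalCDF (a * x) := by
    have h1 := integral_comp_mul_left_Ioi npdf (-x) ha
    have h2 : a * -x = -(a * x) := by ring
    rw [h2] at h1
    rw [integral_Ioi_npdf, cdf_neg_eq] at h1
    have : ∫ ν in Ioi (-x), a * npdf (a * ν) = a * ∫ ν in Ioi (-x), npdf (a * ν) := by
      rw [← integral_const_mul]
    rw [this, h1, smul_eq_mul]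
    field_simp
    ring
  have hB : ∫ ν in Ioi (-x), ν * (a * npdf (a * ν)) = a⁻¹ * npdf (a * x) := by
    rw [integral_Ioi_mul_npdf ha (-x)]
    rw [show a * -x = -(a * x) by ring, npdf_even]
  have j1 : IntegrableOn (fun ν => x * (a * npdf (a * ν))) (Ioi (-x)) :=
    (((integrable_npdf_comp ha).const_mul a).const_mul x).integrableOn
  have j2 : IntegrableOn (fun ν => ν * (a * npdf (a * ν))) (Ioi (-x)) := by
    have := (integrable_mul_npdf_comp ha).const_mul a
    refine this.integrableOn.congr_fun (fun ν _ => by ring) measurableSet_Ioi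
  have hadd : ∫ ν in Ioi (-x), (x + ν) * (a * npdf (a * ν))
      = (∫ ν in Ioi (-x), x * (a * npdf (a * ν)))
        + ∫ ν in Ioi (-x), ν * (a * npdf (a * ν)) := by
    rw [← integral_add j1 j2]
    exact setIntegral_congr_fun measurableSet_Ioi fun ν _ => by ring
  have hx2 : ∫ ν in Ioi (-x), x * (a * npdf (a * ν))
      = x * ∫ ν in Ioi (-x), a * npdf (a * ν) := integral_const_mul x _
  rw [hrw, ← hsplit, hIic, hIoi, hadd, hx2, hA, hB]
  ring

lemma part1 {a : ℝ} (ha : 0 < a) (x : ℝ) :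
    gaussPlusExp a x - x = ∫ t in Set.Iic (-x), stdNormalCDF (a * t) := by
  rw [integral_Iic_cdf ha, gauss_closed ha, show a * -x = -(a * x) by ring,
    cdf_neg_eq, npdf_even]
  ring

theorem stmt15 (a x1 xn : ℝ) (ha : 0 < a) (hx : x1 ≤ xn) :
    (∀ x : ℝ, gaussPlusExp a x - x = ∫ t in Set.Iic (-x), stdNormalCDF (a * t)) ∧
    ((gaussPlusExp a x1 - x1) - (gaussPlusExp a xn - xn)
        = ∫ t in (-xn)..(-x1), stdNormalCDF (a * t)) ∧
    stdNormalCDF (-(a * xn)) * (xn - x1) ≤ (∫ t in (-xn)..(-x1), stdNormalCDF (a * t)) ∧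
    (∫ t in (-xn)..(-x1), stdNormalCDF (a * t)) ≤ stdNormalCDF (-(a * x1)) * (xn - x1) := by
  have hle : -xn ≤ -x1 := by linarith
  have hii : IntervalIntegrable (fun t => stdNormalCDF (a * t)) volume (-xn) (-x1) :=
    (cdf_continuous.comp (continuous_const.mul continuous_id)).intervalIntegrable _ _
  refine ⟨part1 ha, ?_, ?_, ?_⟩
  · rw [part1 ha, part1 ha,
      intervalIntegral.integral_Iic_sub_Iic (integrableOn_cdf_mul_Iic ha (-xn))
        (integrableOn_cdf_mul_Iic ha (-x1))]
  · have h := intervalIntegral.integral_mono_on (f := fun _ => stdNormalCDF (-(a * xn)))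
      (g := fun t => stdNormalCDF (a * t)) hle intervalIntegrable_const hii ?_
    · rw [intervalIntegral.integral_const] at h
      calc stdNormalCDF (-(a * xn)) * (xn - x1)
          = (-x1 - -xn) • stdNormalCDF (-(a * xn)) := by rw [smul_eq_mul]; ring
        _ ≤ _ := h
    · intro t ht
      rw [show -(a * xn) = a * -xn by ring]
      exact cdf_mono (mul_le_mul_of_nonneg_left ht.1 ha.le)
  · have h := intervalIntegral.integral_mono_on (g := fun _ => stdNormalCDF (-(a * x1)))
      (f := fun t => stdNormalCDF (a * t)) hle hii intervalIntegrable_const ?_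
    · rw [intervalIntegral.integral_const] at h
      calc (∫ t in (-xn)..(-x1), stdNormalCDF (a * t))
          ≤ (-x1 - -xn) • stdNormalCDF (-(a * x1)) := h
        _ = stdNormalCDF (-(a * x1)) * (xn - x1) := by rw [smul_eq_mul]; ring
    · intro t ht
      rw [show -(a * x1) = a * -x1 by ring]
      exact cdf_mono (mul_le_mul_of_nonneg_left ht.2 ha.le)
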